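/- Let Y_1,…,Y_t be exchangeable real-valued random variables that are almost surely pairwise distinct, and let 1 ≤ T_0 < t. For each s with T_0 < s ≤ t, define the reduced sequential rank R̃_s := 1 + #{j ≤ T_0 : Y_j < Y_s} ∈ {1,…,T_0+1}. Then, almost surely, for every i ∈ {1,…,T_0+1}, P(R̃_t = i | R̃_{T_0+1},…,R̃_{t−1}) = (1 + #{s : T_0 < s ≤ t−1, R̃_s = i}) / t. In particular, at t = T_0+1 the reduced rank R̃_{T_0+1} is uniform on {1,…,T_0+1}. -/

import Mathlib

open MeasureTheory ProbabilityTheory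
open scoped ENNReal NNReal

/-- A finite family of random elements is exchangeable if its joint law is invariant under
every permutation of the index set. -/
def Exchangeable {Ω ι α : Type*} [MeasurableSpace Ω] [MeasurableSpace α]
    (P : Measure Ω) (X : ι → Ω → α) : Prop :=
  ∀ π : Equiv.Perm ι,
    Measure.map (fun ω => fun i => X (π i) ω) P = Measure.map (fun ω => fun i => X i ω) P

section AuxComb
open Finset

namespace Stmt6Aux

variable {n T0 : ℕ}

/-- The permutation of ranks inserting the last element at rank `j`:
`last ↦ j`, values `≥ j` (other than `last`) shift up by one. -/
def uperm (n : ℕ) (j : Fin (n+1)) : Equiv.Perm (Fin (n+1)) where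
  toFun x := if h : (x:ℕ) = n then j else if (x:ℕ) < (j:ℕ) then x else ⟨(x:ℕ)+1, by omega⟩
  invFun y := if y = j then Fin.last n else if (y:ℕ) < (j:ℕ) then y else ⟨(y:ℕ)-1, by have := y.isLt; omega⟩
  left_inv := by
    intro x
    have hj := j.isLt
    have hx := x.isLt
    apply Fin.ext
    rcases Nat.lt_trichotomy (x:ℕ) (j:ℕ) with h | h | h <;>
      by_cases h0 : (x:ℕ) = n <;>
      simp only [Fin.ext_iff, dite_eq_ite] <;>
      split_ifs <;> simp_all [Fin.last, Fin.ext_iff] <;> omega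
  right_inv := by
    intro y
    have hj := j.isLt
    have hy := y.isLt
    apply Fin.ext
    by_cases h : y = j
    · subst h; simp [Fin.last]
    · have hne : (y:ℕ) ≠ (j:ℕ) := fun he => h (Fin.ext he)
      simp only [Fin.ext_iff, dite_eq_ite] <;> split_ifs <;>
        simp_all [Fin.last, Fin.ext_iff] <;> omega

lemma uperm_last (j : Fin (n+1)) : uperm n j (Fin.last n) = j := by
  simp [uperm, Equiv.coe_fn_mk, Fin.last]

lemma uperm_val (j : Fin (n+1)) (x : Fin (n+1)) (hx : (x:ℕ) < n) :
    ((uperm n j x : Fin (n+1)) : ℕ) = if (x:ℕ) < (j:ℕ) then (x:ℕ) else (x:ℕ)+1 := by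
  have h : (x:ℕ) ≠ n := by omega
  simp only [uperm, Equiv.coe_fn_mk, dif_neg h]
  split_ifs <;> simp

/-- `uperm` is strictly monotone on non-last elements. -/
lemma uperm_lt_iff (j : Fin (n+1)) (x y : Fin (n+1)) (hx : (x:ℕ) < n) (hy : (y:ℕ) < n) :
    uperm n j x < uperm n j y ↔ x < y := by
  rw [Fin.lt_iff_val_lt_val, Fin.lt_iff_val_lt_val, uperm_val j x hx, uperm_val j y hy]
  split_ifs <;> omega

/-- comparison with the inserted rank. -/
lemma uperm_lt_self_iff (j : Fin (n+1)) (x : Fin (n+1)) (hx : (x:ℕ) < n) :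
    uperm n j x < j ↔ x < j := by
  rw [Fin.lt_iff_val_lt_val, Fin.lt_iff_val_lt_val, uperm_val j x hx]
  split_ifs <;> omega

/-- Reduced rank of position `s` in the rank pattern `σ`. -/
def rr (T0 : ℕ) {m : ℕ} (σ : Equiv.Perm (Fin m)) (s : Fin m) : ℕ :=
  1 + (univ.filter (fun j : Fin m => (j:ℕ) < T0 ∧ σ j < σ s)).card

lemma ne_last_val_lt (σ₀ : Equiv.Perm (Fin (n+1))) (hσ₀ : σ₀ (Fin.last n) = Fin.last n)
    (x : Fin (n+1)) (hx : (x:ℕ) < n) : ((σ₀ x : Fin (n+1)) : ℕ) < n := by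
  have hne : σ₀ x ≠ Fin.last n := by
    intro h
    have : x = Fin.last n := σ₀.injective (h.trans hσ₀.symm)
    rw [this] at hx; simp [Fin.last] at hx
  have := (σ₀ x).isLt
  have : ((σ₀ x : Fin (n+1)) : ℕ) ≠ n := fun h => hne (Fin.ext h)
  omega

lemma rr_mul (k : Fin (n+1)) (σ₀ : Equiv.Perm (Fin (n+1))) (hσ₀ : σ₀ (Fin.last n) = Fin.last n)
    (hT0 : T0 ≤ n) (s : Fin (n+1)) (hs : (s:ℕ) < n) :
    rr T0 (uperm n k * σ₀) s = rr T0 σ₀ s := by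
  unfold rr
  congr 1
  apply congrArg
  apply Finset.filter_congr
  intro j _
  by_cases hj : (j:ℕ) < T0
  · have hjn : (j:ℕ) < n := lt_of_lt_of_le hj hT0
    simp only [Equiv.Perm.mul_apply, hj, true_and]
    exact uperm_lt_iff k (σ₀ j) (σ₀ s) (ne_last_val_lt σ₀ hσ₀ j hjn) (ne_last_val_lt σ₀ hσ₀ s hs)
  · simp [hj]

lemma rr_mul_last (k : Fin (n+1)) (σ₀ : Equiv.Perm (Fin (n+1)))
    (hσ₀ : σ₀ (Fin.last n) = Fin.last n) (hT0 : T0 ≤ n) :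
    rr T0 (uperm n k * σ₀) (Fin.last n) =
      1 + (univ.filter (fun j : Fin (n+1) => (j:ℕ) < T0 ∧ σ₀ j < k)).card := by
  unfold rr
  congr 1
  apply congrArg
  apply Finset.filter_congr
  intro j _
  by_cases hj : (j:ℕ) < T0
  · have hjn : (j:ℕ) < n := lt_of_lt_of_le hj hT0
    simp only [Equiv.Perm.mul_apply, hσ₀, uperm_last, hj, true_and]
    exact uperm_lt_self_iff k (σ₀ j) (ne_last_val_lt σ₀ hσ₀ j hjn)
  · simp [hj]

lemma card_pre (hT0 : T0 ≤ n+1) :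
    (univ.filter (fun j : Fin (n+1) => (j:ℕ) < T0)).card = T0 := by
  rcases Nat.lt_or_ge T0 (n+1) with h | h
  · have : (univ.filter (fun j : Fin (n+1) => (j:ℕ) < T0)) = Finset.Iio (⟨T0, h⟩ : Fin (n+1)) := by
      ext j; simp [Fin.lt_iff_val_lt_val]
    rw [this, Fin.card_Iio]
  · have hT : T0 = n+1 := le_antisymm hT0 h
    subst hT
    have : (univ.filter (fun j : Fin (n+1) => (j:ℕ) < n+1)) = univ := by
      ext j; simpa using j.isLt
    rw [this, card_univ, Fintype.card_fin]

lemma rr_last (σ₀ : Equiv.Perm (Fin (n+1))) (hσ₀ : σ₀ (Fin.last n) = Fin.last n)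
    (hT0 : T0 ≤ n) : rr T0 σ₀ (Fin.last n) = T0 + 1 := by
  unfold rr
  have : (univ.filter (fun j : Fin (n+1) => (j:ℕ) < T0 ∧ σ₀ j < σ₀ (Fin.last n)))
      = univ.filter (fun j : Fin (n+1) => (j:ℕ) < T0) := by
    apply Finset.filter_congr
    intro j _
    by_cases hj : (j:ℕ) < T0
    · have hjn : (j:ℕ) < n := lt_of_lt_of_le hj hT0
      have := ne_last_val_lt σ₀ hσ₀ j hjn
      simp only [hσ₀, hj, true_and, iff_true]
      rw [Fin.lt_iff_val_lt_val]
      simpa [Fin.last] using this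
    · simp [hj]
  rw [this, card_pre (le_trans hT0 (Nat.le_succ n))]
  omega

lemma rr_pre_le (σ₀ : Equiv.Perm (Fin (n+1))) (s : Fin (n+1)) (hs : (s:ℕ) < T0)
    (hT0 : T0 ≤ n) : rr T0 σ₀ s ≤ T0 := by
  unfold rr
  have hsub : (univ.filter (fun j : Fin (n+1) => (j:ℕ) < T0 ∧ σ₀ j < σ₀ s))
      ⊆ (univ.filter (fun j : Fin (n+1) => (j:ℕ) < T0)).erase s := by
    intro j hj
    simp only [mem_filter, mem_univ, true_and] at hj
    rw [Finset.mem_erase]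
    refine ⟨?_, by simp [hj.1]⟩
    intro h; rw [h] at hj; exact lt_irrefl _ hj.2
  have := Finset.card_le_card hsub
  rw [Finset.card_erase_of_mem (by simp [hs]), card_pre (by omega)] at this
  omega

lemma rr_strict (σ₀ : Equiv.Perm (Fin (n+1))) (s s' : Fin (n+1)) (hs : (s:ℕ) < T0)
    (h : σ₀ s < σ₀ s') : rr T0 σ₀ s < rr T0 σ₀ s' := by
  unfold rr
  have hss : s ∈ univ.filter (fun j : Fin (n+1) => (j:ℕ) < T0 ∧ σ₀ j < σ₀ s') := by
    simp [hs, h]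
  have hns : s ∉ univ.filter (fun j : Fin (n+1) => (j:ℕ) < T0 ∧ σ₀ j < σ₀ s) := by
    simp
  have hsub : (univ.filter (fun j : Fin (n+1) => (j:ℕ) < T0 ∧ σ₀ j < σ₀ s))
      ⊂ univ.filter (fun j : Fin (n+1) => (j:ℕ) < T0 ∧ σ₀ j < σ₀ s') := by
    rw [Finset.ssubset_iff_of_subset]
    · exact ⟨s, hss, hns⟩
    · intro j hj
      simp only [mem_filter, mem_univ, true_and] at hj ⊢
      exact ⟨hj.1, lt_trans hj.2 h⟩
  have := Finset.card_lt_card hsub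
  omega

/-- On the "pre and last" positions, `rr` takes each value in `[1, T0+1]` exactly once. -/
lemma rr_other_fiber (σ₀ : Equiv.Perm (Fin (n+1))) (hσ₀ : σ₀ (Fin.last n) = Fin.last n)
    (hT0 : T0 ≤ n) (i : ℕ) (hi1 : 1 ≤ i) (hi2 : i ≤ T0 + 1) :
    (univ.filter (fun s : Fin (n+1) => ((s:ℕ) < T0 ∨ (s:ℕ) = n) ∧ rr T0 σ₀ s = i)).card = 1 := by
  classical
  set O : Finset (Fin (n+1)) := univ.filter (fun s : Fin (n+1) => (s:ℕ) < T0 ∨ (s:ℕ) = n) with hO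
  have hinj : Set.InjOn (rr T0 σ₀) O := by
    intro a ha b hb hab
    simp only [hO, coe_filter, Set.mem_setOf_eq, mem_univ, true_and] at ha hb
    by_contra hne
    have hne' : σ₀ a ≠ σ₀ b := fun h => hne (σ₀.injective h)
    rcases lt_or_gt_of_ne hne' with h | h
    · rcases ha with ha | ha
      · exact absurd hab (Nat.ne_of_lt (rr_strict σ₀ a b ha h))
      · -- a is last position, rr = T0+1, but σ₀ a = last is max so σ₀ a < σ₀ b impossible
        have : a = Fin.last n := Fin.ext (by simpa [Fin.last] using ha)
        rw [this, hσ₀] at h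
        exact absurd h (by simpa using (Fin.le_last (σ₀ b)))
    · rcases hb with hb | hb
      · exact absurd hab.symm (Nat.ne_of_lt (rr_strict σ₀ b a hb h))
      · have : b = Fin.last n := Fin.ext (by simpa [Fin.last] using hb)
        rw [this, hσ₀] at h
        exact absurd h (by simpa using (Fin.le_last (σ₀ a)))
  have hcardO : O.card = T0 + 1 := by
    have : O = (univ.filter (fun s : Fin (n+1) => (s:ℕ) < T0)) ∪ {Fin.last n} := by
      ext s
      simp only [hO, mem_filter, mem_univ, true_and, mem_union, mem_singleton]
      constructor
      · rintro (h | h)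
        · exact Or.inl (by simp [h])
        · exact Or.inr (Fin.ext (by simpa [Fin.last] using h))
      · rintro (h | h)
        · exact Or.inl h
        · subst h; exact Or.inr (by simp [Fin.last])
    rw [this, Finset.card_union_of_disjoint, card_pre (by omega), card_singleton]
    rw [Finset.disjoint_singleton_right]
    simp only [mem_filter, mem_univ, true_and, Fin.last]
    omega
  have himage : O.image (rr T0 σ₀) = Finset.Icc 1 (T0+1) := by
    apply Finset.eq_of_subset_of_card_le
    · intro x hx
      simp only [Finset.mem_image] at hx
      obtain ⟨s, hs, rfl⟩ := hx
      simp only [hO, mem_filter, mem_univ, true_and] at hs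
      rw [Finset.mem_Icc]
      rcases hs with hs | hs
      · exact ⟨by unfold rr; omega, le_trans (rr_pre_le σ₀ s hs hT0) (Nat.le_succ T0)⟩
      · have : s = Fin.last n := Fin.ext (by simpa [Fin.last] using hs)
        rw [this, rr_last σ₀ hσ₀ hT0]
        omega
    · rw [Nat.card_Icc, Finset.card_image_of_injOn hinj, hcardO]
      omega
  have hmem : i ∈ O.image (rr T0 σ₀) := by
    rw [himage, Finset.mem_Icc]; omega
  rw [Finset.mem_image] at hmem
  obtain ⟨s, hsO, hsi⟩ := hmem
  rw [Finset.card_eq_one]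
  refine ⟨s, ?_⟩
  ext a
  simp only [mem_filter, mem_univ, true_and, mem_singleton]
  constructor
  · rintro ⟨ha, hai⟩
    apply hinj (by simp [hO, ha]) (by simp only [hO, coe_filter, Set.mem_setOf_eq, mem_univ, true_and]; exact (Finset.mem_filter.mp hsO).2)
    rw [hai, hsi]
  · rintro rfl
    exact ⟨(Finset.mem_filter.mp hsO).2, hsi⟩

lemma insertion_count (σ₀ : Equiv.Perm (Fin (n+1))) (hσ₀ : σ₀ (Fin.last n) = Fin.last n)
    (hT0 : T0 ≤ n) (i : ℕ) (hi1 : 1 ≤ i) (hi2 : i ≤ T0 + 1) :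
    (univ.filter (fun k : Fin (n+1) =>
        1 + (univ.filter (fun j : Fin (n+1) => (j:ℕ) < T0 ∧ σ₀ j < k)).card = i)).card
    = 1 + (univ.filter (fun s : Fin (n+1) =>
        T0 ≤ (s:ℕ) ∧ (s:ℕ) < n ∧ rr T0 σ₀ s = i)).card := by
  classical
  have h1 : (univ.filter (fun k : Fin (n+1) =>
        1 + (univ.filter (fun j : Fin (n+1) => (j:ℕ) < T0 ∧ σ₀ j < k)).card = i)).card
      = (univ.filter (fun s : Fin (n+1) => rr T0 σ₀ s = i)).card := by
    apply Finset.card_nbij' (fun k => σ₀.symm k) (fun s => σ₀ s)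
    · intro k hk
      simp only [mem_coe, mem_filter, mem_univ, true_and] at hk ⊢
      unfold rr
      rw [σ₀.apply_symm_apply]
      exact hk
    · intro s hs
      simp only [mem_coe, mem_filter, mem_univ, true_and] at hs ⊢
      unfold rr at hs
      exact hs
    · intro k _; simp
    · intro s _; simp
  rw [h1]
  have h2 := Finset.card_filter_add_card_filter_not
    (s := univ.filter (fun s : Fin (n+1) => rr T0 σ₀ s = i))
    (p := fun s : Fin (n+1) => T0 ≤ (s:ℕ) ∧ (s:ℕ) < n)
  rw [Finset.filter_filter, Finset.filter_filter] at h2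
  have e1 : (univ.filter (fun s : Fin (n+1) => rr T0 σ₀ s = i ∧ T0 ≤ (s:ℕ) ∧ (s:ℕ) < n))
      = univ.filter (fun s : Fin (n+1) => T0 ≤ (s:ℕ) ∧ (s:ℕ) < n ∧ rr T0 σ₀ s = i) := by
    apply Finset.filter_congr; intro s _; tauto
  have e2 : (univ.filter (fun s : Fin (n+1) => rr T0 σ₀ s = i ∧ ¬(T0 ≤ (s:ℕ) ∧ (s:ℕ) < n)))
      = univ.filter (fun s : Fin (n+1) => ((s:ℕ) < T0 ∨ (s:ℕ) = n) ∧ rr T0 σ₀ s = i) := by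
    apply Finset.filter_congr; intro s _
    have := s.isLt
    constructor
    · rintro ⟨h, h'⟩; exact ⟨by omega, h⟩
    · rintro ⟨h, h'⟩; exact ⟨h', by omega⟩
  rw [e1, e2, rr_other_fiber σ₀ hσ₀ hT0 i hi1 hi2] at h2
  omega

/-- The key combinatorial identity. -/
theorem comb_identity (n T0 i : ℕ) (hT0n : T0 ≤ n) (hi1 : 1 ≤ i) (hi2 : i ≤ T0 + 1)
    (q : Fin (n+1) → ℕ) :
    (n+1) * (univ.filter (fun σ : Equiv.Perm (Fin (n+1)) =>
        (∀ s : Fin (n+1), T0 ≤ (s:ℕ) → (s:ℕ) < n → rr T0 σ s = q s)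
        ∧ rr T0 σ (Fin.last n) = i)).card
    = (1 + (univ.filter (fun s : Fin (n+1) => T0 ≤ (s:ℕ) ∧ (s:ℕ) < n ∧ q s = i)).card)
      * (univ.filter (fun σ : Equiv.Perm (Fin (n+1)) =>
        ∀ s : Fin (n+1), T0 ≤ (s:ℕ) → (s:ℕ) < n → rr T0 σ s = q s)).card := by
  classical
  set Q : Equiv.Perm (Fin (n+1)) → Prop :=
    fun σ => ∀ s : Fin (n+1), T0 ≤ (s:ℕ) → (s:ℕ) < n → rr T0 σ s = q s with hQ
  set A₀ : Finset (Equiv.Perm (Fin (n+1))) :=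
    univ.filter (fun σ => Q σ ∧ σ (Fin.last n) = Fin.last n) with hA₀
  -- facts about decompositions
  have dec_last : ∀ (k : Fin (n+1)) (σ₀ : Equiv.Perm (Fin (n+1))),
      σ₀ (Fin.last n) = Fin.last n → (uperm n k * σ₀) (Fin.last n) = k := by
    intro k σ₀ h
    simp [Equiv.Perm.mul_apply, h, uperm_last]
  have dec_Q : ∀ (k : Fin (n+1)) (σ₀ : Equiv.Perm (Fin (n+1))),
      σ₀ (Fin.last n) = Fin.last n → (Q (uperm n k * σ₀) ↔ Q σ₀) := by
    intro k σ₀ h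
    constructor <;> intro hq s hs1 hs2
    · rw [← rr_mul k σ₀ h hT0n s hs2]; exact hq s hs1 hs2
    · rw [rr_mul k σ₀ h hT0n s hs2]; exact hq s hs1 hs2
  have inv_mem : ∀ σ : Equiv.Perm (Fin (n+1)), Q σ →
      ((uperm n (σ (Fin.last n)))⁻¹ * σ) (Fin.last n) = Fin.last n ∧
      Q ((uperm n (σ (Fin.last n)))⁻¹ * σ) := by
    intro σ hQσ
    have hlast : ((uperm n (σ (Fin.last n)))⁻¹ * σ) (Fin.last n) = Fin.last n := by
      simp only [Equiv.Perm.mul_apply]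
      rw [Equiv.Perm.inv_def, Equiv.symm_apply_eq, uperm_last]
    refine ⟨hlast, ?_⟩
    have hrec : uperm n (σ (Fin.last n)) * ((uperm n (σ (Fin.last n)))⁻¹ * σ) = σ := by
      group
    rw [← dec_Q (σ (Fin.last n)) _ hlast, hrec]
    exact hQσ
  -- first count : card A = (n+1) * card A₀
  have count1 : (univ.filter (fun σ : Equiv.Perm (Fin (n+1)) => Q σ)).card
      = (n+1) * A₀.card := by
    have : (univ.filter (fun σ : Equiv.Perm (Fin (n+1)) => Q σ)).card
        = ((univ : Finset (Fin (n+1))) ×ˢ A₀).card := by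
      apply Finset.card_nbij' (fun σ => (σ (Fin.last n), (uperm n (σ (Fin.last n)))⁻¹ * σ))
        (fun p => uperm n p.1 * p.2)
      · intro σ hσ
        simp only [mem_coe, mem_filter, mem_univ, true_and] at hσ
        obtain ⟨h1, h2⟩ := inv_mem σ hσ
        simp only [mem_coe, Finset.mem_product, mem_univ, true_and, hA₀, mem_filter]
        exact ⟨h2, h1⟩
      · intro p hp
        simp only [mem_coe, Finset.mem_product, hA₀, mem_filter, mem_univ, true_and] at hp
        simp only [mem_coe, mem_filter, mem_univ, true_and]
        exact (dec_Q p.1 p.2 hp.2).mpr hp.1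
      · intro σ hσ; dsimp only; group
      · intro p hp
        simp only [mem_coe, Finset.mem_product, hA₀, mem_filter, mem_univ, true_and] at hp
        have h1 : (uperm n p.1 * p.2) (Fin.last n) = p.1 := dec_last p.1 p.2 hp.2
        ext1
        · simp [h1]
        · simp only [h1]
          group
    rw [this, Finset.card_product, card_univ, Fintype.card_fin]
  -- second count
  have count2 : (univ.filter (fun σ : Equiv.Perm (Fin (n+1)) =>
        Q σ ∧ rr T0 σ (Fin.last n) = i)).card
      = (1 + (univ.filter (fun s : Fin (n+1) => T0 ≤ (s:ℕ) ∧ (s:ℕ) < n ∧ q s = i)).card)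
        * A₀.card := by
    have hbij : (univ.filter (fun σ : Equiv.Perm (Fin (n+1)) =>
          Q σ ∧ rr T0 σ (Fin.last n) = i)).card
        = (A₀.sigma (fun σ₀ => univ.filter (fun k : Fin (n+1) =>
            1 + (univ.filter (fun j : Fin (n+1) => (j:ℕ) < T0 ∧ σ₀ j < k)).card = i))).card := by
      apply Finset.card_nbij'
        (fun σ => ⟨(uperm n (σ (Fin.last n)))⁻¹ * σ, σ (Fin.last n)⟩)
        (fun p => uperm n p.2 * p.1)
      · intro σ hσ
        simp only [mem_coe, mem_filter, mem_univ, true_and] at hσ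
        obtain ⟨hQσ, hrr⟩ := hσ
        obtain ⟨h1, h2⟩ := inv_mem σ hQσ
        simp only [mem_coe, Finset.mem_sigma, hA₀, mem_filter, mem_univ, true_and]
        refine ⟨⟨h2, h1⟩, ?_⟩
        rw [← rr_mul_last (σ (Fin.last n)) _ h1 hT0n]
        have hrec : uperm n (σ (Fin.last n)) * ((uperm n (σ (Fin.last n)))⁻¹ * σ) = σ := by
          group
        rw [hrec]
        exact hrr
      · intro p hp
        simp only [mem_coe, Finset.mem_sigma, hA₀, mem_filter, mem_univ, true_and] at hp
        obtain ⟨⟨hQ0, hlast0⟩, hk⟩ := hp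
        simp only [mem_coe, mem_filter, mem_univ, true_and]
        refine ⟨(dec_Q p.2 p.1 hlast0).mpr hQ0, ?_⟩
        rw [rr_mul_last p.2 p.1 hlast0 hT0n]
        exact hk
      · intro σ hσ; dsimp only; group
      · intro p hp
        simp only [mem_coe, Finset.mem_sigma, hA₀, mem_filter, mem_univ, true_and] at hp
        obtain ⟨⟨hQ0, hlast0⟩, _⟩ := hp
        have h1 : (uperm n p.2 * p.1) (Fin.last n) = p.2 := dec_last p.2 p.1 hlast0
        have : (uperm n ((uperm n p.2 * p.1) (Fin.last n)))⁻¹ * (uperm n p.2 * p.1) = p.1 := by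
          rw [h1]; group
        rw [Sigma.ext_iff]
        exact ⟨this, by dsimp only; rw [h1]⟩
    have hconst : ∀ σ₀ ∈ A₀, (univ.filter (fun k : Fin (n+1) =>
          1 + (univ.filter (fun j : Fin (n+1) => (j:ℕ) < T0 ∧ σ₀ j < k)).card = i)).card
        = 1 + (univ.filter (fun s : Fin (n+1) => T0 ≤ (s:ℕ) ∧ (s:ℕ) < n ∧ q s = i)).card := by
      intro σ₀ hσ₀
      simp only [hA₀, mem_filter, mem_univ, true_and] at hσ₀
      obtain ⟨hQ0, hlast0⟩ := hσ₀
      rw [insertion_count σ₀ hlast0 hT0n i hi1 hi2]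
      congr 1
      apply congrArg
      apply Finset.filter_congr
      intro s _
      constructor
      · rintro ⟨h1, h2, h3⟩; exact ⟨h1, h2, by rw [← hQ0 s h1 h2]; exact h3⟩
      · rintro ⟨h1, h2, h3⟩; exact ⟨h1, h2, by rw [hQ0 s h1 h2]; exact h3⟩
    rw [hbij, Finset.card_sigma, Finset.sum_congr rfl hconst, Finset.sum_const,
      smul_eq_mul, mul_comm]
  rw [count1, count2]
  ring

end Stmt6Aux
end AuxComb

section AuxMeas
open Finset
namespace Stmt6Aux

variable {Ω : Type*} [mΩ : MeasurableSpace Ω] {m : ℕ}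

/-- The pattern event: the relative order of the `Y j ω` agrees with `σ`. -/
def Epat (Y : Fin m → Ω → ℝ) (σ : Equiv.Perm (Fin m)) : Set Ω :=
  {ω | ∀ j j' : Fin m, Y j ω < Y j' ω ↔ σ j < σ j'}

lemma measurableSet_Epat (Y : Fin m → Ω → ℝ) (hY : ∀ s, Measurable (Y s))
    (σ : Equiv.Perm (Fin m)) : MeasurableSet (Epat Y σ) := by
  have : Epat Y σ = ⋂ j, ⋂ j', {ω | Y j ω < Y j' ω ↔ σ j < σ j'} := by
    ext ω; simp [Epat, Set.mem_iInter]
  rw [this]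
  refine MeasurableSet.iInter fun j => MeasurableSet.iInter fun j' => ?_
  by_cases h : σ j < σ j'
  · simp only [h, iff_true]
    exact measurableSet_lt (hY j) (hY j')
  · simp only [h, iff_false, ← Set.compl_setOf (fun ω => Y j ω < Y j' ω)]
    exact (measurableSet_lt (hY j) (hY j')).compl

/-- Order pattern in the function space. -/
def Bpat (σ : Equiv.Perm (Fin m)) : Set (Fin m → ℝ) :=
  {f | ∀ j j' : Fin m, f j < f j' ↔ σ j < σ j'}

lemma measurableSet_Bpat (σ : Equiv.Perm (Fin m)) : MeasurableSet (Bpat σ) := by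
  have : Bpat σ = ⋂ j, ⋂ j', {f : Fin m → ℝ | f j < f j' ↔ σ j < σ j'} := by
    ext f; simp [Bpat, Set.mem_iInter]
  rw [this]
  refine MeasurableSet.iInter fun j => MeasurableSet.iInter fun j' => ?_
  by_cases h : σ j < σ j'
  · simp only [h, iff_true]
    exact measurableSet_lt (measurable_pi_apply j) (measurable_pi_apply j')
  · simp only [h, iff_false, ← Set.compl_setOf (fun f : Fin m → ℝ => f j < f j')]
    exact (measurableSet_lt (measurable_pi_apply j) (measurable_pi_apply j')).compl

/-- Exchangeability makes all pattern events equiprobable. -/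
lemma prob_Epat_eq (P : Measure Ω) (Y : Fin m → Ω → ℝ) (hY : ∀ s, Measurable (Y s))
    (hexch : Exchangeable P Y) (σ : Equiv.Perm (Fin m)) :
    P (Epat Y σ) = P (Epat Y 1) := by
  have hvec : Measurable (fun ω => fun j : Fin m => Y j ω) :=
    measurable_pi_lambda _ fun j => hY j
  have hvecπ : Measurable (fun ω => fun j : Fin m => Y (σ j) ω) :=
    measurable_pi_lambda _ fun j => hY (σ j)
  have h := hexch σ
  have h2 : P ((fun ω => fun j : Fin m => Y (σ j) ω) ⁻¹' Bpat σ)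
      = P ((fun ω => fun j : Fin m => Y j ω) ⁻¹' Bpat σ) := by
    rw [← Measure.map_apply hvecπ (measurableSet_Bpat σ),
      ← Measure.map_apply hvec (measurableSet_Bpat σ), h]
  have e1 : (fun ω => fun j : Fin m => Y (σ j) ω) ⁻¹' Bpat σ = Epat Y 1 := by
    ext ω
    simp only [Set.mem_preimage, Bpat, Set.mem_setOf_eq, Epat]
    constructor
    · intro hω a b
      have := hω (σ.symm a) (σ.symm b)
      simpa using this
    · intro hω j j'
      have := hω (σ j) (σ j')
      simpa using this
  have e2 : (fun ω => fun j : Fin m => Y j ω) ⁻¹' Bpat σ = Epat Y σ := rfl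
  rw [e1, e2] at h2
  exact h2.symm

/-- Coverage: distinct values produce some pattern. -/
lemma exists_pattern (Y : Fin m → Ω → ℝ) (ω : Ω)
    (h : ∀ s s' : Fin m, s ≠ s' → Y s ω ≠ Y s' ω) : ∃ σ, ω ∈ Epat Y σ := by
  set yf : Fin m → ℝ := fun j => Y j ω with hyf
  have hinj : Function.Injective yf := by
    intro a b hab
    by_contra hne
    exact h a b hne hab
  have hsm : StrictMono (yf ∘ Tuple.sort yf) :=
    (Tuple.monotone_sort yf).strictMono_of_injective (hinj.comp (Tuple.sort yf).injective)
  refine ⟨(Tuple.sort yf)⁻¹, fun j j' => ?_⟩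
  have hj : yf j = (yf ∘ Tuple.sort yf) ((Tuple.sort yf)⁻¹ j) := by
    simp [Function.comp, Equiv.Perm.inv_def]
  have hj' : yf j' = (yf ∘ Tuple.sort yf) ((Tuple.sort yf)⁻¹ j') := by
    simp [Function.comp, Equiv.Perm.inv_def]
  show yf j < yf j' ↔ _
  rw [hj, hj']
  exact hsm.lt_iff_lt

/-- Two permutations compatible with the same order pattern agree. -/
lemma pattern_unique (σ τ : Equiv.Perm (Fin m))
    (h : ∀ j j' : Fin m, σ j < σ j' ↔ τ j < τ j') : σ = τ := by
  have hsm : StrictMono (fun a => τ (σ.symm a)) := by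
    intro a b hab
    exact (h (σ.symm a) (σ.symm b)).mp (by simpa using hab)
  have hsurj : Function.Surjective (fun a => τ (σ.symm a)) :=
    τ.surjective.comp σ.symm.surjective
  let e : Fin m ≃o Fin m := StrictMono.orderIsoOfSurjective _ hsm hsurj
  have he : e = OrderIso.refl (Fin m) := Subsingleton.elim _ _
  have : ∀ a, τ (σ.symm a) = a := by
    intro a
    have := congrArg (fun f => (f : Fin m ≃o Fin m) a) he
    simpa [e, StrictMono.coe_orderIsoOfSurjective] using this
  ext j
  have h2 := this (σ j)
  simp only [Equiv.symm_apply_apply] at h2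
  exact (congrArg Fin.val h2.symm)

lemma Epat_disjoint (Y : Fin m → Ω → ℝ) {σ τ : Equiv.Perm (Fin m)} (hne : σ ≠ τ) :
    Disjoint (Epat Y σ) (Epat Y τ) := by
  rw [Set.disjoint_left]
  intro ω hσ hτ
  exact hne (pattern_unique σ τ (fun j j' => ((hσ j j').symm.trans (hτ j j'))))

/-- Decomposition of the probability of a pattern-determined event. -/
lemma prob_eq_card_smul (P : Measure Ω) [IsProbabilityMeasure P]
    (Y : Fin m → Ω → ℝ) (hY : ∀ s, Measurable (Y s)) (hexch : Exchangeable P Y)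
    (hdist : ∀ᵐ ω ∂P, ∀ s s' : Fin m, s ≠ s' → Y s ω ≠ Y s' ω)
    (D : Set Ω) (hD : MeasurableSet D)
    (cond : Equiv.Perm (Fin m) → Prop) [DecidablePred cond]
    (hDc : ∀ σ, ∀ ω ∈ Epat Y σ, (ω ∈ D ↔ cond σ)) :
    P D = (univ.filter cond).card • P (Epat Y 1) := by
  classical
  have hcompl : P (⋃ σ, Epat Y σ)ᶜ = 0 := by
    have hsub : (⋃ σ, Epat Y σ)ᶜ ⊆ {ω | ¬ ∀ s s' : Fin m, s ≠ s' → Y s ω ≠ Y s' ω} := by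
      intro ω hω
      simp only [Set.mem_compl_iff, Set.mem_iUnion, not_exists] at hω
      intro hdis
      obtain ⟨σ, hσ⟩ := exists_pattern Y ω hdis
      exact hω σ hσ
    exact measure_mono_null hsub (ae_iff.mp hdist)
  have hcov : P D = P (D ∩ ⋃ σ, Epat Y σ) := (measure_inter_conull hcompl).symm
  rw [hcov, Set.inter_iUnion, measure_iUnion ?hd ?hm]
  case hd =>
    intro σ τ hne
    exact Disjoint.mono Set.inter_subset_right Set.inter_subset_right (Epat_disjoint Y hne)
  case hm => exact fun σ => hD.inter (measurableSet_Epat Y hY σ)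
  rw [tsum_fintype]
  have hterm : ∀ σ, P (D ∩ Epat Y σ) = if cond σ then P (Epat Y 1) else 0 := by
    intro σ
    by_cases hc : cond σ
    · have he : D ∩ Epat Y σ = Epat Y σ :=
        Set.inter_eq_self_of_subset_right (fun ω hω => (hDc σ ω hω).mpr hc)
      rw [he, prob_Epat_eq P Y hY hexch σ, if_pos hc]
    · have he : D ∩ Epat Y σ = ∅ := by
        ext ω
        simp only [Set.mem_inter_iff, Set.mem_empty_iff_false, iff_false, not_and]
        intro h1 h2
        exact hc ((hDc σ ω h2).mp h1)
      rw [he, if_neg hc, measure_empty]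
  rw [Finset.sum_congr rfl (fun σ _ => hterm σ), ← Finset.sum_filter, Finset.sum_const]

end Stmt6Aux

end AuxMeas


lemma Stmt6Aux.card_filter_subtype2 {m : ℕ} (p1 p2 : Fin m → Prop) [DecidablePred p1]
    [DecidablePred p2] (r : Fin m → Prop) [DecidablePred r]
    [DecidablePred (fun s : {x : Fin m // p1 x ∧ p2 x} => r s.1)] :
    (Finset.univ.filter (fun s : Fin m => p1 s ∧ p2 s ∧ r s)).card
      = (Finset.univ.filter (fun s : {x : Fin m // p1 x ∧ p2 x} => r s.1)).card := by
  refine Finset.card_bij'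
    (fun s hs => (⟨s, (Finset.mem_filter.mp hs).2.1, (Finset.mem_filter.mp hs).2.2.1⟩ :
      {x : Fin m // p1 x ∧ p2 x}))
    (fun q _ => q.1) (fun a ha => ?_) (fun q hq => ?_) (fun a ha => rfl) (fun q hq => rfl)
  · simp only [Finset.mem_filter, Finset.mem_univ, true_and] at ha ⊢
    exact ha.2.2
  · simp only [Finset.mem_filter, Finset.mem_univ, true_and] at hq ⊢
    exact ⟨q.2.1, q.2.2, hq⟩


open Stmt6Aux in
/-- Let `Y_1,…,Y_t` (here indexed 0-based by `Fin t`, pre-treatment indices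
being those `< T0`, post-treatment those `≥ T0`, the current one being `t-1`) be
exchangeable and a.s. pairwise distinct. With `R̃_s := 1 + #{j < T0 : Y_j < Y_s}` the
reduced sequential ranks, a.s. for every `i ∈ {1,…,T0+1}`, the conditional probability
that `R̃_{t} = i` given the previous reduced ranks `R̃_{T0+1},…,R̃_{t−1}` equals
`(1 + #{previous post-treatment s with R̃_s = i}) / t`. -/
theorem stmt_6
    {Ω : Type*} [mΩ : MeasurableSpace Ω] (P : Measure Ω) [IsProbabilityMeasure P]
    (t T0 : ℕ) (hT0 : 1 ≤ T0) (hT0t : T0 < t)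
    (Y : Fin t → Ω → ℝ) (hY : ∀ s, Measurable (Y s))
    (hexch : Exchangeable P Y)
    (hdist : ∀ᵐ ω ∂P, ∀ s s' : Fin t, s ≠ s' → Y s ω ≠ Y s' ω)
    (Rred : Fin t → Ω → ℕ)
    (hRred : ∀ s ω, Rred s ω
      = 1 + (Finset.univ.filter (fun j : Fin t => (j : ℕ) < T0 ∧ Y j ω < Y s ω)).card)
    (𝒢 : MeasurableSpace Ω)
    (h𝒢 : 𝒢 = MeasurableSpace.comap
      (fun ω => fun s : {s : Fin t // T0 ≤ (s : ℕ) ∧ (s : ℕ) + 1 < t} => Rred s.1 ω)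
      inferInstance)
    (tlast : Fin t) (htlast : (tlast : ℕ) = t - 1) :
    ∀ i : ℕ, 1 ≤ i → i ≤ T0 + 1 →
      P[Set.indicator {ω | Rred tlast ω = i} (fun _ => (1 : ℝ))|𝒢]
        =ᵐ[P] fun ω =>
          (1 + ((Finset.univ.filter
            (fun s : Fin t => T0 ≤ (s : ℕ) ∧ (s : ℕ) + 1 < t ∧ Rred s ω = i)).card : ℝ))
          / (t : ℝ) := by
  classical
  intro i hi1 hi2
  subst h𝒢
  obtain ⟨n, rfl⟩ : ∃ n, t = n + 1 := ⟨t - 1, by omega⟩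
  have hT0n : T0 ≤ n := by omega
  have htl : tlast = Fin.last n := Fin.ext (by simpa [Fin.last] using htlast)
  subst htl
  open Finset in
  -- measurability of the reduced ranks
  have hRmeas : ∀ s, Measurable (Rred s) := by
    intro s
    have hre : Rred s = fun ω =>
        1 + ∑ j : Fin (n+1), if (j : ℕ) < T0 ∧ Y j ω < Y s ω then 1 else 0 := by
      funext ω
      rw [hRred]
      congr 1
      rw [Finset.card_filter]
    rw [hre]
    refine Measurable.add measurable_const (Finset.measurable_sum _ fun j _ => ?_)
    refine Measurable.ite ?_ measurable_const measurable_const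
    by_cases hc : (j : ℕ) < T0
    · have : {ω | (j : ℕ) < T0 ∧ Y j ω < Y s ω} = {ω | Y j ω < Y s ω} := by
        ext ω; simp [hc]
      rw [this]
      exact measurableSet_lt (hY j) (hY s)
    · have : {ω | (j : ℕ) < T0 ∧ Y j ω < Y s ω} = ∅ := by
        ext ω; simp [hc]
      rw [this]
      exact MeasurableSet.empty
  set G : Ω → ({s : Fin (n+1) // T0 ≤ (s : ℕ) ∧ (s : ℕ) + 1 < n+1} → ℕ) :=
    (fun ω => fun s : {s : Fin (n+1) // T0 ≤ (s : ℕ) ∧ (s : ℕ) + 1 < n+1} => Rred s.1 ω)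
    with hGdef
  have hGmeas : Measurable G := measurable_pi_lambda _ fun s => hRmeas s.1
  have hm : MeasurableSpace.comap G inferInstance ≤ mΩ := hGmeas.comap_le
  haveI : SigmaFinite (P.trim hm) := inferInstance
  have hDi : MeasurableSet {ω | Rred (Fin.last n) ω = i} :=
    hRmeas (Fin.last n) (measurableSet_singleton i)
  -- all subsets of the (countable) target space are measurable
  have hsing : ∀ bb : {s : Fin (n+1) // T0 ≤ (s : ℕ) ∧ (s : ℕ) + 1 < n+1} → ℕ,
      MeasurableSet {bb} := by
    intro bb
    have : ({bb} : Set _) = ⋂ s, (fun g => g s) ⁻¹' {bb s} := by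
      ext g
      simp only [Set.mem_singleton_iff, Set.mem_iInter, Set.mem_preimage,
        Set.mem_singleton_iff]
      exact ⟨fun h s => by rw [h], fun h => funext h⟩
    rw [this]
    exact MeasurableSet.iInter fun s => measurable_pi_apply s (measurableSet_singleton _)
  have hallS : ∀ B : Set ({s : Fin (n+1) // T0 ≤ (s : ℕ) ∧ (s : ℕ) + 1 < n+1} → ℕ),
      MeasurableSet B := by
    intro B
    have hB : B = ⋃ b ∈ B, {b} := (Set.biUnion_of_singleton B).symm
    rw [hB]
    exact MeasurableSet.biUnion (Set.to_countable B) fun b _ => hsing b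
  -- the candidate conditional expectation
  set g : Ω → ℝ := fun ω =>
      (1 + ((Finset.univ.filter
        (fun s : Fin (n+1) => T0 ≤ (s : ℕ) ∧ (s : ℕ) + 1 < n+1 ∧ Rred s ω = i)).card : ℝ))
      / ((n+1 : ℕ) : ℝ) with hgdef
  have hgmeas : Measurable g := by
    have hcard : Measurable (fun ω => ((Finset.univ.filter
        (fun s : Fin (n+1) => T0 ≤ (s : ℕ) ∧ (s : ℕ) + 1 < n+1 ∧ Rred s ω = i)).card : ℕ)) := by
      have hre : (fun ω => ((Finset.univ.filter
          (fun s : Fin (n+1) => T0 ≤ (s : ℕ) ∧ (s : ℕ) + 1 < n+1 ∧ Rred s ω = i)).card : ℕ))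
          = fun ω => ∑ s : Fin (n+1),
            if T0 ≤ (s : ℕ) ∧ (s : ℕ) + 1 < n+1 ∧ Rred s ω = i then 1 else 0 := by
        funext ω
        rw [Finset.card_filter]
      rw [hre]
      refine Finset.measurable_sum _ fun s _ => ?_
      refine Measurable.ite ?_ measurable_const measurable_const
      by_cases hc : T0 ≤ (s : ℕ) ∧ (s : ℕ) + 1 < n+1
      · have : {ω | T0 ≤ (s : ℕ) ∧ (s : ℕ) + 1 < n+1 ∧ Rred s ω = i}
            = Rred s ⁻¹' {i} := by
          ext ω; simp [hc.1, hc.2]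
        rw [this]
        exact hRmeas s (measurableSet_singleton i)
      · have : {ω | T0 ≤ (s : ℕ) ∧ (s : ℕ) + 1 < n+1 ∧ Rred s ω = i} = ∅ := by
          ext ω; simp only [Set.mem_setOf_eq, Set.mem_empty_iff_false, iff_false]
          tauto
        rw [this]
        exact MeasurableSet.empty
    have : Measurable (fun ω => ((Finset.univ.filter
        (fun s : Fin (n+1) => T0 ≤ (s : ℕ) ∧ (s : ℕ) + 1 < n+1 ∧ Rred s ω = i)).card : ℝ)) :=
      (measurable_from_top (f := (Nat.cast : ℕ → ℝ))).comp hcard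
    exact (measurable_const.add this).div_const _
  have hind_int : Integrable
      (Set.indicator {ω | Rred (Fin.last n) ω = i} (fun _ => (1 : ℝ))) P :=
    (integrable_const (1 : ℝ)).indicator hDi
  have hg_int : Integrable g P := by
    refine Integrable.mono' (integrable_const ((n : ℝ) + 2)) hgmeas.aestronglyMeasurable
      (Filter.Eventually.of_forall fun ω => ?_)
    have h1 : (0:ℝ) ≤ g ω := by
      rw [hgdef]
      positivity
    have hle : ((Finset.univ.filter
        (fun s : Fin (n+1) => T0 ≤ (s : ℕ) ∧ (s : ℕ) + 1 < n+1 ∧ Rred s ω = i)).card : ℝ)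
        ≤ (n : ℝ) + 1 := by
      have := Finset.card_filter_le (Finset.univ : Finset (Fin (n+1)))
        (fun s : Fin (n+1) => T0 ≤ (s : ℕ) ∧ (s : ℕ) + 1 < n+1 ∧ Rred s ω = i)
      rw [Finset.card_univ, Fintype.card_fin] at this
      exact_mod_cast this
    rw [Real.norm_eq_abs, abs_of_nonneg h1, hgdef]
    have h2 : ((n+1:ℕ):ℝ) = (n:ℝ)+1 := by push_cast; ring
    rw [h2]
    calc (1 + _) / ((n:ℝ)+1) ≤ (1 + ((n:ℝ)+1)) / ((n:ℝ)+1) := by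
          gcongr
      _ ≤ (n : ℝ) + 2 := by
          rw [div_le_iff₀ (by positivity)]
          nlinarith [Nat.cast_nonneg (α := ℝ) n]
    -- 𝒢-measurability of g
  have hgm : AEStronglyMeasurable[MeasurableSpace.comap G inferInstance] g P := by
    set F : ({s : Fin (n+1) // T0 ≤ (s : ℕ) ∧ (s : ℕ) + 1 < n+1} → ℕ) → ℝ := fun b =>
      (1 + ((Finset.univ.filter
        (fun s : {s : Fin (n+1) // T0 ≤ (s : ℕ) ∧ (s : ℕ) + 1 < n+1} => b s = i)).card : ℝ))
      / ((n+1 : ℕ) : ℝ) with hFdef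
    have hgF : g = F ∘ G := by
      funext ω
      rw [hgdef]
      simp only [Function.comp_apply, hFdef, hGdef]
      congr 2
      exact_mod_cast Stmt6Aux.card_filter_subtype2 (fun s : Fin (n+1) => T0 ≤ (s:ℕ))
        (fun s : Fin (n+1) => (s:ℕ) + 1 < n+1) (fun s : Fin (n+1) => Rred s ω = i)
    have hFmeas : Measurable F := fun t _ => hallS _
    have hGcm : Measurable[MeasurableSpace.comap G inferInstance] G :=
      measurable_iff_comap_le.mpr le_rfl
    exact ⟨F ∘ G, (hFmeas.comp hGcm).stronglyMeasurable, by rw [hgF]⟩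
  -- the order-pattern bridge
  have hbridge : ∀ (σ : Equiv.Perm (Fin (n+1))) (ω : Ω), ω ∈ Stmt6Aux.Epat Y σ →
      ∀ s, Rred s ω = Stmt6Aux.rr T0 σ s := by
    intro σ ω hω s
    rw [hRred]
    unfold Stmt6Aux.rr
    congr 1
    apply congrArg
    apply Finset.filter_congr
    intro j _
    by_cases hj : (j : ℕ) < T0
    · simp only [hj, true_and]
      exact hω j s
    · simp [hj]
  -- the key per-fiber identity
  have hkey : ∀ b : ({s : Fin (n+1) // T0 ≤ (s : ℕ) ∧ (s : ℕ) + 1 < n+1} → ℕ),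
      ∫ x in G ⁻¹' {b}, g x ∂P
        = ∫ x in G ⁻¹' {b},
            Set.indicator {ω | Rred (Fin.last n) ω = i} (fun _ => (1:ℝ)) x ∂P := by
    intro b
    set q : Fin (n+1) → ℕ := fun s =>
      if hs : T0 ≤ (s : ℕ) ∧ (s : ℕ) + 1 < n+1 then b ⟨s, hs⟩ else 0 with hqdef
    set cB : ℕ := (Finset.univ.filter
      (fun s : Fin (n+1) => T0 ≤ (s:ℕ) ∧ (s:ℕ) < n ∧ q s = i)).card with hcBdef
    have hmemiff : ∀ ω, ω ∈ G ⁻¹' {b} ↔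
        ∀ s : {s : Fin (n+1) // T0 ≤ (s : ℕ) ∧ (s : ℕ) + 1 < n+1}, Rred s.1 ω = b s := by
      intro ω
      simp only [Set.mem_preimage, Set.mem_singleton_iff, hGdef]
      exact funext_iff
    have hD2iff : ∀ σ, ∀ ω ∈ Stmt6Aux.Epat Y σ, (ω ∈ G ⁻¹' {b} ↔
        (∀ s : Fin (n+1), T0 ≤ (s:ℕ) → (s:ℕ) < n → Stmt6Aux.rr T0 σ s = q s)) := by
      intro σ ω hω
      rw [hmemiff ω]
      constructor
      · intro h s hs1 hs2
        have hs' : T0 ≤ (s:ℕ) ∧ (s:ℕ)+1 < n+1 := ⟨hs1, by omega⟩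
        rw [← hbridge σ ω hω s, hqdef]
        simp only [dif_pos hs']
        exact h ⟨s, hs'⟩
      · intro h s
        have hs2 : ((s.1:Fin (n+1)):ℕ) < n := by
          have := s.2
          omega
        rw [hbridge σ ω hω s.1, h s.1 s.2.1 hs2, hqdef]
        simp only [dif_pos s.2]
    have hD1iff : ∀ σ, ∀ ω ∈ Stmt6Aux.Epat Y σ,
        (ω ∈ ({ω | Rred (Fin.last n) ω = i} ∩ G ⁻¹' {b}) ↔
          ((∀ s : Fin (n+1), T0 ≤ (s:ℕ) → (s:ℕ) < n → Stmt6Aux.rr T0 σ s = q s)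
            ∧ Stmt6Aux.rr T0 σ (Fin.last n) = i)) := by
      intro σ ω hω
      rw [Set.mem_inter_iff, hD2iff σ ω hω, Set.mem_setOf_eq, hbridge σ ω hω (Fin.last n)]
      tauto
    have P1 := Stmt6Aux.prob_eq_card_smul P Y hY hexch hdist _
      (hDi.inter (hGmeas (hsing b))) _ hD1iff
    have P2 := Stmt6Aux.prob_eq_card_smul P Y hY hexch hdist _ (hGmeas (hsing b)) _ hD2iff
    have comb := Stmt6Aux.comb_identity n T0 i hT0n hi1 hi2 q
    have henn : ((n+1 : ℕ) : ℝ≥0∞) * P ({ω | Rred (Fin.last n) ω = i} ∩ G ⁻¹' {b})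
        = ((1 + cB : ℕ) : ℝ≥0∞) * P (G ⁻¹' {b}) := by
      rw [P1, P2, nsmul_eq_mul, nsmul_eq_mul, ← mul_assoc, ← mul_assoc,
        ← Nat.cast_mul, ← Nat.cast_mul]
      congr 1
      rw [← hcBdef] at comb
      exact_mod_cast comb
    have hreal : (P ({ω | Rred (Fin.last n) ω = i} ∩ G ⁻¹' {b})).toReal * ((n:ℝ)+1)
        = (1 + (cB:ℝ)) * (P (G ⁻¹' {b})).toReal := by
      have h := congrArg ENNReal.toReal henn
      rw [ENNReal.toReal_mul, ENNReal.toReal_mul, ENNReal.toReal_natCast, ENNReal.toReal_natCast] at h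
      push_cast at h ⊢
      linarith
    have hIind : ∫ x in G ⁻¹' {b},
        Set.indicator {ω | Rred (Fin.last n) ω = i} (fun _ => (1:ℝ)) x ∂P
        = (P ({ω | Rred (Fin.last n) ω = i} ∩ G ⁻¹' {b})).toReal := by
      rw [MeasureTheory.setIntegral_indicator hDi, MeasureTheory.setIntegral_const,
        smul_eq_mul, mul_one, Set.inter_comm, measureReal_def]
    have hgconst : ∀ ω ∈ G ⁻¹' {b}, g ω = (1 + (cB:ℝ)) / ((n:ℝ)+1) := by
      intro ω hω
      simp only [hgdef]
      have hcard : (Finset.univ.filter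
          (fun s : Fin (n+1) => T0 ≤ (s : ℕ) ∧ (s : ℕ) + 1 < n+1 ∧ Rred s ω = i)).card = cB := by
        rw [hcBdef]
        congr 1
        apply Finset.filter_congr
        intro s _
        have hb : ∀ hs : T0 ≤ (s:ℕ) ∧ (s:ℕ)+1 < n+1, Rred s ω = b ⟨s, hs⟩ := by
          intro hs
          exact (hmemiff ω).mp hω ⟨s, hs⟩
        constructor
        · rintro ⟨h1, h2, h3⟩
          refine ⟨h1, by omega, ?_⟩
          rw [hqdef]
          simp only [dif_pos (⟨h1, h2⟩ : T0 ≤ (s:ℕ) ∧ (s:ℕ)+1 < n+1)]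
          rw [← hb ⟨h1, h2⟩]
          exact h3
        · rintro ⟨h1, h2, h3⟩
          have h2' : (s:ℕ)+1 < n+1 := by omega
          refine ⟨h1, h2', ?_⟩
          rw [hb ⟨h1, h2'⟩]
          rw [hqdef] at h3
          simp only [dif_pos (⟨h1, h2'⟩ : T0 ≤ (s:ℕ) ∧ (s:ℕ)+1 < n+1)] at h3
          exact h3
      rw [hcard]
      push_cast
      ring
    have hIg : ∫ x in G ⁻¹' {b}, g x ∂P
        = (P (G ⁻¹' {b})).toReal * ((1 + (cB:ℝ)) / ((n:ℝ)+1)) := by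
      rw [MeasureTheory.setIntegral_congr_fun (hGmeas (hsing b)) hgconst,
        MeasureTheory.setIntegral_const, smul_eq_mul, measureReal_def]
    rw [hIg, hIind]
    have hn1 : ((n:ℝ)+1) ≠ 0 := by positivity
    rw [eq_comm, mul_div_assoc'] at *
    field_simp
    linarith [hreal]
  -- integrals agree on every set of the sub-σ-algebra
  have hg_eq : ∀ A : Set Ω, MeasurableSet[MeasurableSpace.comap G inferInstance] A →
      P A < ∞ → ∫ x in A, g x ∂P
        = ∫ x in A, Set.indicator {ω | Rred (Fin.last n) ω = i} (fun _ => (1:ℝ)) x ∂P := by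
    rintro A ⟨B, -, rfl⟩ -
    have hAun : G ⁻¹' B = ⋃ b : B, G ⁻¹' {(b : ({s : Fin (n+1) // T0 ≤ (s:ℕ) ∧ (s:ℕ)+1 < n+1} → ℕ))} := by
      ext ω
      simp only [Set.mem_preimage, Set.mem_iUnion, Set.mem_singleton_iff]
      constructor
      · intro h
        exact ⟨⟨G ω, h⟩, rfl⟩
      · rintro ⟨⟨c, hc⟩, h⟩
        rw [h]
        exact hc
    have hmeasb : ∀ b : B, MeasurableSet (G ⁻¹' {(b : ({s : Fin (n+1) // T0 ≤ (s:ℕ) ∧ (s:ℕ)+1 < n+1} → ℕ))}) := fun b => hGmeas (hsing _)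
    have hdisj : Pairwise (Function.onFun Disjoint fun b : B => G ⁻¹' {(b : ({s : Fin (n+1) // T0 ≤ (s:ℕ) ∧ (s:ℕ)+1 < n+1} → ℕ))}) := by
      intro c c' hcc
      simp only [Function.onFun]
      rw [Set.disjoint_left]
      intro ω h1 h2
      simp only [Set.mem_preimage, Set.mem_singleton_iff] at h1 h2
      exact hcc (Subtype.ext (h1.symm.trans h2))
    rw [hAun, MeasureTheory.integral_iUnion hmeasb hdisj hg_int.integrableOn,
      MeasureTheory.integral_iUnion hmeasb hdisj hind_int.integrableOn]
    exact tsum_congr fun b => hkey b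
  exact (MeasureTheory.ae_eq_condExp_of_forall_setIntegral_eq hm hind_int
    (fun A _ _ => hg_int.integrableOn) hg_eq hgm).symm
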